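/- Let M₁ = diag(1/α², 1, 1/α², 1) with α > 0. Among 4×4 matrices A of one of the two forms A = [[1,0,0,0],[a₅,a₆,0,0],[0,0,1,a₁₂],[0,0,a₁₅,a₁₆]] or A = [[0,0,1,0],[0,0,a₇,a₈],[1,0,0,0],[a₁₃,a₁₄,0,0]], the set of those with AᵀM₁A = M₁ forms a group isomorphic to the dihedral group of order 8. -/

import Mathlib

open Matrix

/-- The automorphisms of 2A₂ (two allowed shapes). -/
def AutShape (A : Matrix (Fin 4) (Fin 4) ℝ) : Prop :=
  (∃ a₅ a₆ a₁₂ a₁₅ a₁₆ : ℝ,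
      A = !![1, 0, 0, 0; a₅, a₆, 0, 0; 0, 0, 1, a₁₂; 0, 0, a₁₅, a₁₆]) ∨
  (∃ a₇ a₈ a₁₃ a₁₄ : ℝ,
      A = !![0, 0, 1, 0; 0, 0, a₇, a₈; 1, 0, 0, 0; a₁₃, a₁₄, 0, 0])

namespace DihedralAux

open DihedralGroup

def Dm (e₁ e₂ : ℝ) : Matrix (Fin 4) (Fin 4) ℝ :=
  !![1, 0, 0, 0; 0, e₁, 0, 0; 0, 0, 1, 0; 0, 0, 0, e₂]

def Sm (e₃ e₄ : ℝ) : Matrix (Fin 4) (Fin 4) ℝ :=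
  !![0, 0, 1, 0; 0, 0, 0, e₃; 1, 0, 0, 0; 0, e₄, 0, 0]

lemma DmT (e₁ e₂ : ℝ) : (Dm e₁ e₂)ᵀ = Dm e₁ e₂ := by
  ext i j; fin_cases i <;> fin_cases j <;> simp [Dm, Matrix.vecHead, Matrix.vecTail]

lemma SmT (e₃ e₄ : ℝ) : (Sm e₃ e₄)ᵀ = Sm e₄ e₃ := by
  ext i j; fin_cases i <;> fin_cases j <;> simp [Sm, Matrix.vecHead, Matrix.vecTail]

lemma DmDm (a b c d : ℝ) : Dm a b * Dm c d = Dm (a*c) (b*d) := by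
  ext i j; fin_cases i <;> fin_cases j <;>
    simp [Dm, Matrix.mul_apply, Fin.sum_univ_succ, Matrix.vecHead, Matrix.vecTail] <;>
    try ring

lemma DmSm (a b c d : ℝ) : Dm a b * Sm c d = Sm (a*c) (b*d) := by
  ext i j; fin_cases i <;> fin_cases j <;>
    simp [Dm, Sm, Matrix.mul_apply, Fin.sum_univ_succ, Matrix.vecHead, Matrix.vecTail] <;>
    try ring

lemma SmDm (a b c d : ℝ) : Sm a b * Dm c d = Sm (d*a) (c*b) := by
  ext i j; fin_cases i <;> fin_cases j <;>
    simp [Dm, Sm, Matrix.mul_apply, Fin.sum_univ_succ, Matrix.vecHead, Matrix.vecTail] <;>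
    try ring

lemma SmSm (a b c d : ℝ) : Sm a b * Sm c d = Dm (a*d) (b*c) := by
  ext i j; fin_cases i <;> fin_cases j <;>
    simp [Dm, Sm, Matrix.mul_apply, Fin.sum_univ_succ, Matrix.vecHead, Matrix.vecTail] <;>
    try ring

lemma DmM (α e₁ e₂ : ℝ) (h1 : e₁ * e₁ = 1) (h2 : e₂ * e₂ = 1) :
    (Dm e₁ e₂)ᵀ * !![1/α^2, 0, 0, 0; 0, 1, 0, 0; 0, 0, 1/α^2, 0; 0, 0, 0, (1:ℝ)] * Dm e₁ e₂ =
      !![1/α^2, 0, 0, 0; 0, 1, 0, 0; 0, 0, 1/α^2, 0; 0, 0, 0, (1:ℝ)] := by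
  rw [DmT]
  ext i j; fin_cases i <;> fin_cases j <;>
    simp [Dm, Matrix.mul_apply, Fin.sum_univ_succ, Matrix.vecHead, Matrix.vecTail] <;>
    first
      | linear_combination h1
      | linear_combination h2
      | ring

lemma SmM (α e₃ e₄ : ℝ) (h1 : e₃ * e₃ = 1) (h2 : e₄ * e₄ = 1) :
    (Sm e₃ e₄)ᵀ * !![1/α^2, 0, 0, 0; 0, 1, 0, 0; 0, 0, 1/α^2, 0; 0, 0, 0, (1:ℝ)] * Sm e₃ e₄ =
      !![1/α^2, 0, 0, 0; 0, 1, 0, 0; 0, 0, 1/α^2, 0; 0, 0, 0, (1:ℝ)] := by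
  rw [SmT]
  ext i j; fin_cases i <;> fin_cases j <;>
    simp [Sm, Matrix.mul_apply, Fin.sum_univ_succ, Matrix.vecHead, Matrix.vecTail] <;>
    first
      | linear_combination h1
      | linear_combination h2
      | ring

noncomputable def dec (d : DihedralGroup 4) : Matrix (Fin 4) (Fin 4) ℝ :=
  if d = r 0 then Dm 1 1
  else if d = r 1 then Sm 1 (-1)
  else if d = r 2 then Dm (-1) (-1)
  else if d = r 3 then Sm (-1) 1
  else if d = sr 0 then Dm (-1) 1
  else if d = sr 1 then Sm (-1) (-1)
  else if d = sr 2 then Dm 1 (-1)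
  else Sm 1 1

noncomputable def enc (A : Matrix (Fin 4) (Fin 4) ℝ) : DihedralGroup 4 :=
  if A 0 0 = 1 then
    if A 1 1 = 1 then (if A 3 3 = 1 then r 0 else sr 2)
    else (if A 3 3 = 1 then sr 0 else r 2)
  else
    if A 1 3 = 1 then (if A 3 1 = 1 then sr 3 else r 1)
    else (if A 3 1 = 1 then r 3 else sr 1)

lemma dlist (d : DihedralGroup 4) :
    d = r 0 ∨ d = r 1 ∨ d = r 2 ∨ d = r 3 ∨
    d = sr 0 ∨ d = sr 1 ∨ d = sr 2 ∨ d = sr 3 := by revert d; decide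

lemma dec_r0 : dec (r 0) = Dm 1 1 := by simp +decide [dec]
lemma dec_r1 : dec (r 1) = Sm 1 (-1) := by simp +decide [dec]
lemma dec_r2 : dec (r 2) = Dm (-1) (-1) := by simp +decide [dec]
lemma dec_r3 : dec (r 3) = Sm (-1) 1 := by simp +decide [dec]
lemma dec_sr0 : dec (sr 0) = Dm (-1) 1 := by simp +decide [dec]
lemma dec_sr1 : dec (sr 1) = Sm (-1) (-1) := by simp +decide [dec]
lemma dec_sr2 : dec (sr 2) = Dm 1 (-1) := by simp +decide [dec]
lemma dec_sr3 : dec (sr 3) = Sm 1 1 := by simp +decide [dec]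

lemma enc_dec (d : DihedralGroup 4) : enc (dec d) = d := by
  rcases dlist d with rfl|rfl|rfl|rfl|rfl|rfl|rfl|rfl <;>
    simp only [dec_r0, dec_r1, dec_r2, dec_r3, dec_sr0, dec_sr1, dec_sr2, dec_sr3] <;>
    simp [enc, Dm, Sm, Matrix.cons_val'] <;> norm_num

lemma dec_mul (a b : DihedralGroup 4) : dec a * dec b = dec (a * b) := by
  rcases dlist a with rfl|rfl|rfl|rfl|rfl|rfl|rfl|rfl <;>
    rcases dlist b with rfl|rfl|rfl|rfl|rfl|rfl|rfl|rfl <;>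
    simp +decide only [dec, DmDm, DmSm, SmDm, SmSm, if_true, if_false] <;>
    norm_num

lemma shape_dec (d : DihedralGroup 4) : AutShape (dec d) := by
  rcases dlist d with rfl|rfl|rfl|rfl|rfl|rfl|rfl|rfl <;>
    simp only [dec_r0, dec_r1, dec_r2, dec_r3, dec_sr0, dec_sr1, dec_sr2, dec_sr3]
  · exact Or.inl ⟨0, 1, 0, 0, 1, rfl⟩
  · exact Or.inr ⟨0, 1, 0, -1, rfl⟩
  · exact Or.inl ⟨0, -1, 0, 0, -1, rfl⟩
  · exact Or.inr ⟨0, -1, 0, 1, rfl⟩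
  · exact Or.inl ⟨0, -1, 0, 0, 1, rfl⟩
  · exact Or.inr ⟨0, -1, 0, -1, rfl⟩
  · exact Or.inl ⟨0, 1, 0, 0, -1, rfl⟩
  · exact Or.inr ⟨0, 1, 0, 1, rfl⟩

lemma metric_dec (α : ℝ) (d : DihedralGroup 4) :
    (dec d)ᵀ * !![1/α^2, 0, 0, 0; 0, 1, 0, 0; 0, 0, 1/α^2, 0; 0, 0, 0, (1:ℝ)] * dec d =
      !![1/α^2, 0, 0, 0; 0, 1, 0, 0; 0, 0, 1/α^2, 0; 0, 0, 0, (1:ℝ)] := by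
  rcases dlist d with rfl|rfl|rfl|rfl|rfl|rfl|rfl|rfl <;>
    simp only [dec_r0, dec_r1, dec_r2, dec_r3, dec_sr0, dec_sr1, dec_sr2, dec_sr3]
  · exact DmM α 1 1 (by norm_num) (by norm_num)
  · exact SmM α 1 (-1) (by norm_num) (by norm_num)
  · exact DmM α (-1) (-1) (by norm_num) (by norm_num)
  · exact SmM α (-1) 1 (by norm_num) (by norm_num)
  · exact DmM α (-1) 1 (by norm_num) (by norm_num)
  · exact SmM α (-1) (-1) (by norm_num) (by norm_num)
  · exact DmM α 1 (-1) (by norm_num) (by norm_num)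
  · exact SmM α 1 1 (by norm_num) (by norm_num)

lemma classify (α : ℝ) (hα : 0 < α) (A : Matrix (Fin 4) (Fin 4) ℝ)
    (hs : AutShape A)
    (hm : Aᵀ * !![1/α^2, 0, 0, 0; 0, 1, 0, 0; 0, 0, 1/α^2, 0; 0, 0, 0, (1:ℝ)] * A =
      !![1/α^2, 0, 0, 0; 0, 1, 0, 0; 0, 0, 1/α^2, 0; 0, 0, 0, (1:ℝ)]) :
    ∃ d, A = dec d := by
  have hα2 : ((α : ℝ) ^ 2)⁻¹ ≠ 0 := by positivity
  rcases hs with ⟨a₅, a₆, a₁₂, a₁₅, a₁₆, rfl⟩ | ⟨a₇, a₈, a₁₃, a₁₄, rfl⟩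
  · rw [show (!![1, 0, 0, 0; a₅, a₆, 0, 0; 0, 0, 1, a₁₂; 0, 0, a₁₅, a₁₆])ᵀ =
        !![1, a₅, 0, 0; 0, a₆, 0, 0; 0, 0, 1, a₁₅; 0, 0, a₁₂, a₁₆] from by
        ext i j; fin_cases i <;> fin_cases j <;> rfl] at hm
    have h11 := congrFun (congrFun hm 1) 1
    have h22 := congrFun (congrFun hm 2) 2
    have h23 := congrFun (congrFun hm 2) 3
    have h33 := congrFun (congrFun hm 3) 3
    have h00 := congrFun (congrFun hm 0) 0
    simp [Matrix.mul_apply, Fin.sum_univ_four] at h00 h11 h22 h23 h33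
    subst h00 h22
    have h12 : a₁₂ = 0 := by
      rcases mul_eq_zero.mp (by linarith [h23] : ((α:ℝ)^2)⁻¹ * a₁₂ = 0) with h | h
      · exact absurd h hα2
      · exact h
    subst h12
    have h16 : a₁₆ * a₁₆ = 1 := by linarith [h33]
    rcases mul_self_eq_one_iff.mp h11 with rfl | rfl <;>
      rcases mul_self_eq_one_iff.mp h16 with rfl | rfl
    · exact ⟨r 0, by rw [dec_r0]; rfl⟩
    · exact ⟨sr 2, by rw [dec_sr2]; rfl⟩
    · exact ⟨sr 0, by rw [dec_sr0]; rfl⟩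
    · exact ⟨r 2, by rw [dec_r2]; rfl⟩
  · rw [show (!![0, 0, 1, 0; 0, 0, a₇, a₈; 1, 0, 0, 0; a₁₃, a₁₄, 0, 0])ᵀ =
        !![0, 0, 1, a₁₃; 0, 0, 0, a₁₄; 1, a₇, 0, 0; 0, a₈, 0, 0] from by
        ext i j; fin_cases i <;> fin_cases j <;> rfl] at hm
    have h00 := congrFun (congrFun hm 0) 0
    have h11 := congrFun (congrFun hm 1) 1
    have h22 := congrFun (congrFun hm 2) 2
    have h33 := congrFun (congrFun hm 3) 3
    simp [Matrix.mul_apply, Fin.sum_univ_four] at h00 h11 h22 h33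
    subst h00 h22
    rcases mul_self_eq_one_iff.mp h33 with rfl | rfl <;>
      rcases mul_self_eq_one_iff.mp h11 with rfl | rfl
    · exact ⟨sr 3, by rw [dec_sr3]; rfl⟩
    · exact ⟨r 1, by rw [dec_r1]; rfl⟩
    · exact ⟨r 3, by rw [dec_r3]; rfl⟩
    · exact ⟨sr 1, by rw [dec_sr1]; rfl⟩

end DihedralAux

open DihedralAux in
theorem isometric_automorphisms_M1_G2_dihedral (α : ℝ) (hα : 0 < α) :
    ∃ f : {A : Matrix (Fin 4) (Fin 4) ℝ //
        AutShape A ∧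
        Aᵀ * !![1/α^2, 0, 0, 0; 0, 1, 0, 0; 0, 0, 1/α^2, 0; 0, 0, 0, (1:ℝ)] * A =
          !![1/α^2, 0, 0, 0; 0, 1, 0, 0; 0, 0, 1/α^2, 0; 0, 0, 0, (1:ℝ)]} →
      DihedralGroup 4,
      Function.Bijective f ∧
      ∀ a b, ∃ h, f ⟨a.1 * b.1, h⟩ = f a * f b := by
  refine ⟨fun a => enc a.1, ⟨?_, ?_⟩, ?_⟩
  · intro a b h
    obtain ⟨da, hda⟩ := classify α hα a.1 a.2.1 a.2.2
    obtain ⟨db, hdb⟩ := classify α hα b.1 b.2.1 b.2.2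
    have h' : enc a.1 = enc b.1 := h
    rw [hda, hdb, enc_dec, enc_dec] at h'
    exact Subtype.ext (by rw [hda, hdb, h'])
  · intro d
    exact ⟨⟨dec d, shape_dec d, metric_dec α d⟩, enc_dec d⟩
  · intro a b
    obtain ⟨da, hda⟩ := classify α hα a.1 a.2.1 a.2.2
    obtain ⟨db, hdb⟩ := classify α hα b.1 b.2.1 b.2.2
    have hprod : a.1 * b.1 = dec (da * db) := by rw [hda, hdb, dec_mul]
    refine ⟨⟨by rw [hprod]; exact shape_dec _, by rw [hprod]; exact metric_dec α _⟩, ?_⟩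
    show enc (a.1 * b.1) = enc a.1 * enc b.1
    rw [hprod, enc_dec, hda, hdb, enc_dec, enc_dec]
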